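/- In a sum ring A (a unital ring with elements α₁,α₂,β₁,β₂ satisfying α₁β₁ = α₂β₂ = 1 and β₁α₁ + β₂α₂ = 1), there exists an invertible 3×3 matrix Q ∈ M₃(A) such that Q · diag(a ⊕ b, 0, 0) · Q⁻¹ = diag(a, b, 0) for all a, b ∈ A, where a ⊕ b := β₁aα₁ + β₂bα₂. -/
import Mathlib


/-- Wagoner's lemma: in a sum ring `A` (with `α₁β₁ = α₂β₂ = 1`, `β₁α₁ + β₂α₂ = 1`),
there exists an invertible `3×3` matrix `Q` such that
`Q · diag(a ⊕ b, 0, 0) · Q⁻¹ = diag(a, b, 0)` for all `a, b ∈ A`, where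
`a ⊕ b = β₁aα₁ + β₂bα₂`. -/
theorem stmt11 (A : Type) [Ring A] (α₁ α₂ β₁ β₂ : A)
    (h1 : α₁ * β₁ = 1) (h2 : α₂ * β₂ = 1) (h3 : β₁ * α₁ + β₂ * α₂ = 1) :
    ∃ Q Q' : Matrix (Fin 3) (Fin 3) A,
      Q * Q' = 1 ∧ Q' * Q = 1 ∧
      ∀ a b : A,
        Q * Matrix.diagonal ![β₁ * a * α₁ + β₂ * b * α₂, 0, 0] * Q' =
          Matrix.diagonal ![a, b, 0] := by
  have h12 : α₁ * β₂ = 0 := by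
    have key : α₁ * β₂ + α₁ * β₂ = 0 + α₁ * β₂ := by
      calc α₁ * β₂ + α₁ * β₂ = α₁ * β₁ * (α₁ * β₂) + α₁ * β₂ * (α₂ * β₂) := by
            rw [h1, h2]; noncomm_ring
        _ = α₁ * (β₁ * α₁ + β₂ * α₂) * β₂ := by noncomm_ring
        _ = 0 + α₁ * β₂ := by rw [h3, mul_one, zero_add]
    exact add_right_cancel key
  have h21 : α₂ * β₁ = 0 := by
    have key : α₂ * β₁ + α₂ * β₁ = 0 + α₂ * β₁ := by
      calc α₂ * β₁ + α₂ * β₁ = α₂ * β₁ * (α₁ * β₁) + α₂ * β₂ * (α₂ * β₁) := by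
            rw [h1, h2]; noncomm_ring
        _ = α₂ * (β₁ * α₁ + β₂ * α₂) * β₁ := by noncomm_ring
        _ = 0 + α₂ * β₁ := by rw [h3, mul_one, zero_add]
    exact add_right_cancel key
  have L1 : ∀ x : A, α₁ * (β₁ * x) = x := fun x => by rw [← mul_assoc, h1, one_mul]
  have L2 : ∀ x : A, α₂ * (β₂ * x) = x := fun x => by rw [← mul_assoc, h2, one_mul]
  have Z12 : ∀ x : A, α₁ * (β₂ * x) = 0 := fun x => by rw [← mul_assoc, h12, zero_mul]
  have Z21 : ∀ x : A, α₂ * (β₁ * x) = 0 := fun x => by rw [← mul_assoc, h21, zero_mul]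
  refine ⟨!![α₁,0,0; α₂,0,0; 0,β₁,β₂], !![β₁,β₂,0; 0,0,α₁; 0,0,α₂], ?_, ?_, ?_⟩
  · ext i j
    fin_cases i <;> fin_cases j <;>
      simp [Matrix.mul_apply, Fin.sum_univ_three, Matrix.one_apply,
        Matrix.vecHead, Matrix.vecTail, Function.comp, h1, h2, h3, h12, h21]
  · ext i j
    fin_cases i <;> fin_cases j <;>
      simp [Matrix.mul_apply, Fin.sum_univ_three, Matrix.one_apply,
        Matrix.vecHead, Matrix.vecTail, Function.comp, h1, h2, h3, h12, h21]
  · intro a b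
    ext i j
    fin_cases i <;> fin_cases j <;>
      simp [Matrix.mul_apply, Fin.sum_univ_three, Matrix.vecMul_diagonal,
        Matrix.vecHead, Matrix.vecTail, Function.comp, mul_add, add_mul, mul_assoc,
        L1, L2, Z12, Z21, h1, h2, h3, h12, h21]
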